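/- arXiv:0901.1627 — 3 statements merged into one kernel-verified Lean document; each statement's English description precedes it below -/
import Mathlib

section
/- In the category Cat of small categories, let I = {(0 → 1), (2 ↪ [1]), p: P → [1]}, where 0 is the empty category, 1 the terminal category, 2 the discrete category on two objects, [1] the linearly ordered set {0 < 1} viewed as a category, P the pushout of the inclusion 2 ↪ [1] with itself (the parallel pair), and p the functor sending both nontrivial arrows of P to the nontrivial arrow of [1]. Then: (1) I^□ consists exactly of those functors that are full, faithful and surjective on objects; (2) □(I^□) consists exactly of those functors that are injective on objects. -/
open CategoryTheory Limits

namespace Paper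

/-- The class of maps with the right lifting property against all maps in `H`. -/
def Rlp {K : Type*} [Category K] (H : MorphismProperty K) : MorphismProperty K :=
  fun _ _ g => ∀ ⦃P Q : K⦄ (h : P ⟶ Q), H h → HasLiftingProperty h g

/-- The class of maps with the left lifting property against all maps in `H`. -/
def Llp {K : Type*} [Category K] (H : MorphismProperty K) : MorphismProperty K :=
  fun _ _ f => ∀ ⦃P Q : K⦄ (h : P ⟶ Q), H h → HasLiftingProperty f h

/-- the unique functor `0 ⟶ 1` from the empty category to the terminal category -/
def mapEmpty : Cat.of (Discrete PEmpty) ⟶ Cat.of (Discrete PUnit) :=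
  (Functor.empty _).toCatHom

/-- the inclusion `2 ↪ [1]` of the discrete category on two objects into the
linearly ordered set `{0 < 1}` -/
def inclFunctor : Discrete (Fin 2) ⥤ Fin 2 := Discrete.functor (fun i => (i : Fin 2))

def mapIncl : Cat.of (Discrete (Fin 2)) ⟶ Cat.of (Fin 2) := inclFunctor.toCatHom

/-- the functor `p : P → [1]` from the parallel pair category which sends both
nontrivial arrows to the nontrivial arrow of `[1]` -/
def pFunctor : WalkingParallelPair ⥤ Fin 2 :=
  parallelPair (homOfLE (by decide : (0 : Fin 2) ≤ 1))
    (homOfLE (by decide : (0 : Fin 2) ≤ 1))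

def mapP : Cat.of WalkingParallelPair ⟶ Cat.of (Fin 2) := pFunctor.toCatHom

/-- the set `I = {(0 → 1), (2 ↪ [1]), p : P → [1]}` of functors -/
def ICat : MorphismProperty Cat.{0, 0} := fun _ _ F =>
  Arrow.mk F = Arrow.mk mapEmpty ∨ Arrow.mk F = Arrow.mk mapIncl ∨
    Arrow.mk F = Arrow.mk mapP

universe u v

/-! ### helper functors and extensionality lemmas -/

lemma catComp_toFunctor {A B E : Cat} (F : A ⟶ B) (G : B ⟶ E) :
    (F ≫ G).toFunctor = F.toFunctor ⋙ G.toFunctor := rfl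

/-- a functor as a morphism of `Cat`, with the objects kept -/
def catHom {A B : Cat} (F : A ⥤ B) : A ⟶ B := F.toCatHom

@[simp] lemma catHom_toFunctor {A B : Cat} (F : A ⥤ B) : (catHom F).toFunctor = F := rfl

section Helpers

/-- build a functor out of `Fin 2` from a single morphism -/
def two {C : Type*} [Category C] {X Y : C} (f : X ⟶ Y) : Fin 2 ⥤ C where
  obj i := if i = 0 then X else Y
  map {i j} g :=
    if hi : i = 0 then
      if hj : j = 0 then eqToHom (by simp [hi, hj])
      else eqToHom (by simp [hi]) ≫ f ≫ eqToHom (by simp [hj])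
    else
      if hj : j = 0 then absurd (leOfHom g) (by subst hj; omega)
      else eqToHom (by simp [hi, hj])
  map_id i := by fin_cases i <;> simp
  map_comp {i j k} g h := by
    fin_cases i <;> fin_cases j <;> fin_cases k <;>
      first
        | exact absurd (leOfHom g) (by decide)
        | exact absurd (leOfHom h) (by decide)
        | simp

variable {C : Type*} [Category C] {X Y : C} (f : X ⟶ Y)

@[simp] lemma two_obj_0 : (two f).obj 0 = X := rfl
@[simp] lemma two_obj_1 : (two f).obj 1 = Y := rfl
/-- the nontrivial arrow of `Fin 2` -/
def arr01 : (0 : Fin 2) ⟶ 1 := homOfLE (by decide)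

@[simp] lemma two_map_01 : (two f).map arr01 = f := by
  simp [two, arr01]

/-- ext lemma for functors out of `Fin 2` -/
lemma fin2_ext {F G : Fin 2 ⥤ C} (h0 : F.obj 0 = G.obj 0) (h1 : F.obj 1 = G.obj 1)
    (hm : F.map arr01 = eqToHom h0 ≫ G.map arr01 ≫ eqToHom h1.symm) : F = G := by
  refine CategoryTheory.Functor.ext (fun i => by fin_cases i <;> assumption)
    (fun i j g => ?_)
  fin_cases i <;> fin_cases j
  · rw [Subsingleton.elim g (𝟙 _)]; simp
  · rw [Subsingleton.elim g arr01]
    exact hm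
  · exact absurd (leOfHom g) (by decide)
  · rw [Subsingleton.elim g (𝟙 _)]; simp

/-- ext lemma for functors out of `Discrete (Fin 2)` -/
lemma dfin2_ext {F G : Discrete (Fin 2) ⥤ C} (h : ∀ i, F.obj i = G.obj i) : F = G := by
  refine CategoryTheory.Functor.ext h (fun a b g => ?_)
  obtain rfl : a = b := by
    obtain ⟨i⟩ := a; obtain ⟨j⟩ := b
    exact Discrete.ext (Discrete.eq_of_hom g)
  rw [Subsingleton.elim g (𝟙 a)]
  simp

/-- ext lemma for functors out of `Discrete PUnit` -/
lemma dpunit_ext {F G : Discrete PUnit ⥤ C} (h : F.obj ⟨⟨⟩⟩ = G.obj ⟨⟨⟩⟩) : F = G := by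
  refine CategoryTheory.Functor.ext (fun ⟨⟨⟩⟩ => h) (fun a b g => ?_)
  obtain rfl : a = b := by obtain ⟨⟨⟩⟩ := a; obtain ⟨⟨⟩⟩ := b; rfl
  rw [Subsingleton.elim g (𝟙 a)]
  simp

/-- ext lemma for functors out of `WalkingParallelPair` -/
lemma wpp_ext {F G : WalkingParallelPair ⥤ C} (h0 : F.obj .zero = G.obj .zero)
    (h1 : F.obj .one = G.obj .one)
    (hl : F.map .left = eqToHom h0 ≫ G.map .left ≫ eqToHom h1.symm)
    (hr : F.map .right = eqToHom h0 ≫ G.map .right ≫ eqToHom h1.symm) : F = G := by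
  refine CategoryTheory.Functor.ext (fun i => by cases i <;> assumption)
    (fun i j g => ?_)
  change WalkingParallelPairHom i j at g
  cases g <;> simp [hl, hr]

end Helpers

/-- cancel `eqToHom` conjugation -/
lemma eq_of_conj {C : Type*} [Category C] {X Y X' Y' : C} (p : X' = X) (q : Y = Y')
    {f g : X ⟶ Y} (h : eqToHom p ≫ f ≫ eqToHom q = eqToHom p ≫ g ≫ eqToHom q) :
    f = g := by subst p; subst q; simpa using h

/-! ### lifting against the three generators -/

section Generators

/-- a morphism of `Cat` out of `Cat.of X`, as a functor out of `X` -/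
def fromOf {X : Type u} [Category.{v} X] {B : Cat.{v, u}} (G : Cat.of X ⟶ B) : X ⥤ B :=
  G.toFunctor

/-- a functor out of `X`, as a morphism of `Cat` out of `Cat.of X` -/
def ofFun {X : Type u} [Category.{v} X] {B : Cat.{v, u}} (G : X ⥤ B) : Cat.of X ⟶ B := ⟨G⟩

@[simp] lemma fromOf_ofFun {X : Type u} [Category.{v} X] {B : Cat.{v, u}} (G : X ⥤ B) :
    fromOf (ofFun G) = G := rfl

lemma fromOf_comp {X : Type u} [Category.{v} X] {B E : Cat.{v, u}} (t : Cat.of X ⟶ B)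
    (F : B ⟶ E) : fromOf (t ≫ F) = fromOf t ⋙ F.toFunctor := rfl

lemma ext_fromOf {X : Type u} [Category.{v} X] {B : Cat.{v, u}} {G H : Cat.of X ⟶ B}
    (h : fromOf G = fromOf H) : G = H := Cat.ext h

lemma mapIncl_comp {B : Cat.{0, 0}} (b : Cat.of (Fin 2) ⟶ B) :
    fromOf (mapIncl ≫ b) = inclFunctor ⋙ fromOf b := rfl

lemma mapP_comp {B : Cat.{0, 0}} (b : Cat.of (Fin 2) ⟶ B) :
    fromOf (mapP ≫ b) = pFunctor ⋙ fromOf b := rfl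

variable {C D : Cat.{0,0}} (F : C ⟶ D)

lemma hlp_mapEmpty (h : Function.Surjective F.toFunctor.obj) : HasLiftingProperty mapEmpty F := by
  constructor
  intro t b sq
  obtain ⟨c, hc⟩ := h ((fromOf b).obj ⟨⟨⟩⟩)
  refine CommSq.HasLift.mk' ⟨ofFun (Discrete.functor (fun _ => c)),
    ext_fromOf (Functor.empty_ext' _ _), ext_fromOf ?_⟩
  rw [fromOf_comp, fromOf_ofFun]
  refine dpunit_ext ?_
  simpa using hc

lemma surj_of_hlp (h : HasLiftingProperty mapEmpty F) : Function.Surjective F.toFunctor.obj := by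
  intro d
  have sq : CommSq (ofFun (Functor.empty C)) mapEmpty F
      (ofFun (Discrete.functor (fun _ => d))) := ⟨ext_fromOf (Functor.empty_ext' _ _)⟩
  have hr := Functor.congr_obj (congrArg fromOf sq.fac_right) (⟨⟨⟩⟩ : Discrete PUnit)
  simp only [fromOf_comp, fromOf_ofFun, Functor.comp_obj, Discrete.functor_obj] at hr
  exact ⟨(fromOf sq.lift).obj ⟨⟨⟩⟩, hr⟩

lemma hlp_mapIncl (h : F.toFunctor.Full) : HasLiftingProperty mapIncl F := by
  haveI := h
  constructor
  intro t b sq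
  have hw := congrArg fromOf sq.w
  rw [fromOf_comp, mapIncl_comp] at hw
  have h0 := Functor.congr_obj hw (Discrete.mk (0 : Fin 2))
  have h1 := Functor.congr_obj hw (Discrete.mk (1 : Fin 2))
  simp only [Functor.comp_obj, inclFunctor, Discrete.functor_obj] at h0 h1
  obtain ⟨f, hf⟩ := F.toFunctor.map_surjective
    (eqToHom h0 ≫ (fromOf b).map arr01 ≫ eqToHom h1.symm)
  refine CommSq.HasLift.mk' ⟨ofFun (two f), ?_, ?_⟩
  · refine ext_fromOf (dfin2_ext (fun i => ?_))
    obtain ⟨i⟩ := i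
    fin_cases i <;> simp [mapIncl_comp, inclFunctor, two]
  · refine ext_fromOf (fin2_ext h0 h1 ?_)
    simpa [fromOf_comp] using hf

lemma full_of_hlp (h : HasLiftingProperty mapIncl F) : F.toFunctor.Full := by
  constructor
  intro X Y d
  have sq : CommSq (ofFun (Discrete.functor ![X, Y]))
      mapIncl F (ofFun (two d)) := by
    constructor
    refine ext_fromOf ?_
    rw [fromOf_comp, mapIncl_comp, fromOf_ofFun, fromOf_ofFun]
    refine dfin2_ext (fun i => ?_)
    obtain ⟨i⟩ := i
    fin_cases i <;> simp [inclFunctor, two]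
  have e0 := Functor.congr_obj (congrArg fromOf sq.fac_left) (Discrete.mk (0 : Fin 2))
  have e1 := Functor.congr_obj (congrArg fromOf sq.fac_left) (Discrete.mk (1 : Fin 2))
  simp only [mapIncl_comp, fromOf_ofFun, Functor.comp_obj, inclFunctor, Discrete.functor_obj,
    Matrix.cons_val_zero, Matrix.cons_val_one, Matrix.head_cons] at e0 e1
  refine ⟨eqToHom e0.symm ≫ (fromOf sq.lift).map arr01 ≫ eqToHom e1, ?_⟩
  have hm : F.toFunctor.map ((fromOf sq.lift).map arr01) =
      eqToHom (congrArg F.toFunctor.obj e0) ≫ d ≫ eqToHom (congrArg F.toFunctor.obj e1).symm := by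
    have hm0 := Functor.congr_hom (congrArg fromOf sq.fac_right) arr01
    simp only [fromOf_comp, fromOf_ofFun, Functor.comp_map, two_map_01] at hm0
    rw [hm0]
    rfl
  simp [hm, eqToHom_map]

lemma hlp_mapP (h : F.toFunctor.Faithful) : HasLiftingProperty mapP F := by
  haveI := h
  constructor
  intro t b sq
  have hw := congrArg fromOf sq.w
  rw [fromOf_comp, mapP_comp] at hw
  have h0 := Functor.congr_obj hw WalkingParallelPair.zero
  have h1 := Functor.congr_obj hw WalkingParallelPair.one
  simp only [Functor.comp_obj, pFunctor, parallelPair_obj_zero, parallelPair_obj_one]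
    at h0 h1
  have hfg : (fromOf t).map WalkingParallelPairHom.left =
      (fromOf t).map WalkingParallelPairHom.right := by
    apply F.toFunctor.map_injective
    have hl := Functor.congr_hom hw WalkingParallelPairHom.left
    have hr := Functor.congr_hom hw WalkingParallelPairHom.right
    simp only [Functor.comp_map, pFunctor, parallelPair_map_left, parallelPair_map_right]
      at hl hr
    rw [hl, hr]
  refine CommSq.HasLift.mk' ⟨ofFun (two ((fromOf t).map .left)), ?_, ?_⟩
  · refine ext_fromOf ?_
    rw [mapP_comp, fromOf_ofFun]
    refine wpp_ext ?_ ?_ ?_ ?_ <;> simp [pFunctor, two, arr01, ← hfg] <;>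
      exact (Category.id_comp _).symm
  · refine ext_fromOf (fin2_ext h0 h1 ?_)
    have hl := Functor.congr_hom hw WalkingParallelPairHom.left
    simp only [Functor.comp_map, pFunctor, parallelPair_map_left] at hl
    simp only [fromOf_comp, fromOf_ofFun, Functor.comp_map, two_map_01]
    exact hl

lemma faithful_of_hlp (h : HasLiftingProperty mapP F) : F.toFunctor.Faithful := by
  constructor
  intro X Y f g hfg
  have sq : CommSq (ofFun (parallelPair f g)) mapP F
      (ofFun (two (F.toFunctor.map f))) := by
    constructor
    refine ext_fromOf ?_
    rw [fromOf_comp, mapP_comp, fromOf_ofFun, fromOf_ofFun]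
    refine wpp_ext ?_ ?_ ?_ ?_ <;> simp [pFunctor, two, arr01, hfg] <;>
      exact (Category.id_comp _).symm
  have hl := Functor.congr_hom (congrArg fromOf sq.fac_left) WalkingParallelPairHom.left
  have hr := Functor.congr_hom (congrArg fromOf sq.fac_left) WalkingParallelPairHom.right
  simp only [mapP_comp, fromOf_ofFun, Functor.comp_map, pFunctor, parallelPair_map_left,
    parallelPair_map_right] at hl hr
  rw [hl] at hr
  exact eq_of_conj _ _ hr

end Generators

/-! ### characterization of `Rlp ICat` -/

lemma rlp_eq :
    Rlp ICat = fun _ _ F => F.toFunctor.Full ∧ F.toFunctor.Faithful ∧ Function.Surjective F.toFunctor.obj := by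
  funext C D F
  apply propext
  constructor
  · intro h
    exact ⟨full_of_hlp F (h mapIncl (Or.inr (Or.inl rfl))),
      faithful_of_hlp F (h mapP (Or.inr (Or.inr rfl))),
      surj_of_hlp F (h mapEmpty (Or.inl rfl))⟩
  · rintro ⟨hfull, hfaith, hsurj⟩ P Q g hg
    rcases hg with e | e | e
    · haveI := hlp_mapEmpty F hsurj
      exact HasLiftingProperty.of_arrow_iso_left (eqToIso e).symm F
    · haveI := hlp_mapIncl F hfull
      exact HasLiftingProperty.of_arrow_iso_left (eqToIso e).symm F
    · haveI := hlp_mapP F hfaith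
      exact HasLiftingProperty.of_arrow_iso_left (eqToIso e).symm F

/-! ### the indiscrete category -/

/-- the indiscrete category on a type -/
structure Ind (α : Type) : Type where
  as : α

instance {α : Type} : Category (Ind α) where
  Hom _ _ := PUnit
  id _ := ⟨⟩
  comp _ _ := ⟨⟩

/-- the canonical functor from `C` to the indiscrete category on `Option C` -/
def toInd (C : Cat.{0,0}) : C ⥤ Ind (Option C) where
  obj X := ⟨some X⟩
  map _ := ⟨⟩

/-- the functor from an indiscrete category to the point -/
def indToPUnit (α : Type) : Ind α ⥤ Discrete PUnit where
  obj _ := ⟨⟨⟩⟩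
  map _ := 𝟙 _

instance {α : Type} {X Y : Ind α} : Subsingleton (X ⟶ Y) :=
  inferInstanceAs (Subsingleton PUnit)

lemma indToPUnit_full (α : Type) : (indToPUnit α).Full :=
  ⟨fun _ => ⟨⟨⟩, Subsingleton.elim _ _⟩⟩

lemma indToPUnit_faithful (α : Type) : (indToPUnit α).Faithful :=
  ⟨fun _ => Subsingleton.elim _ _⟩

lemma indToPUnit_surj (α : Type) :
    Function.Surjective (indToPUnit (Option α)).obj := by
  rintro ⟨⟨⟩⟩
  exact ⟨⟨none⟩, rfl⟩

/-! ### construction of lifts against full, faithful, surjective functors -/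

section Lift

variable {C D E E' : Type} [Category C] [Category D] [Category E] [Category E']

open Classical in
/-- the object part of the lift -/
noncomputable def liftObj (F : C ⥤ D) (g : E ⥤ E') (t : C ⥤ E) (b : D ⥤ E')
    (hsurj : Function.Surjective g.obj) (d : D) : E :=
  if hd : ∃ c, F.obj c = d then t.obj hd.choose else (hsurj (b.obj d)).choose

lemma liftObj_spec (F : C ⥤ D) (g : E ⥤ E') (t : C ⥤ E) (b : D ⥤ E')
    (hsurj : Function.Surjective g.obj) (hw : t ⋙ g = F ⋙ b) (d : D) :
    g.obj (liftObj F g t b hsurj d) = b.obj d := by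
  unfold liftObj
  split_ifs with hd
  · have h1 := Functor.congr_obj hw hd.choose
    simp only [Functor.comp_obj] at h1
    rw [h1, hd.choose_spec]
  · exact (hsurj (b.obj d)).choose_spec

lemma liftObj_comp (F : C ⥤ D) (g : E ⥤ E') (t : C ⥤ E) (b : D ⥤ E')
    (hsurj : Function.Surjective g.obj) (hinj : Function.Injective F.obj) (c : C) :
    liftObj F g t b hsurj (F.obj c) = t.obj c := by
  unfold liftObj
  rw [dif_pos ⟨c, rfl⟩]
  exact congrArg t.obj (hinj (⟨c, rfl⟩ : ∃ c', F.obj c' = F.obj c).choose_spec)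

/-- the lift -/
noncomputable def liftFun (F : C ⥤ D) (g : E ⥤ E') [g.Full] [g.Faithful]
    (t : C ⥤ E) (b : D ⥤ E')
    (hsurj : Function.Surjective g.obj) (hw : t ⋙ g = F ⋙ b) : D ⥤ E where
  obj := liftObj F g t b hsurj
  map {d d'} f := g.preimage
    (eqToHom (liftObj_spec F g t b hsurj hw d) ≫ b.map f ≫
      eqToHom (liftObj_spec F g t b hsurj hw d').symm)
  map_id d := g.map_injective (by simp)
  map_comp f f' := g.map_injective (by simp)

lemma liftFun_fac_right (F : C ⥤ D) (g : E ⥤ E') [g.Full] [g.Faithful]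
    (t : C ⥤ E) (b : D ⥤ E')
    (hsurj : Function.Surjective g.obj) (hw : t ⋙ g = F ⋙ b) :
    liftFun F g t b hsurj hw ⋙ g = b := by
  refine CategoryTheory.Functor.ext (liftObj_spec F g t b hsurj hw) (fun d d' f => ?_)
  simp [liftFun]

lemma liftFun_fac_left (F : C ⥤ D) (g : E ⥤ E') [g.Full] [g.Faithful]
    (t : C ⥤ E) (b : D ⥤ E')
    (hsurj : Function.Surjective g.obj) (hw : t ⋙ g = F ⋙ b)
    (hinj : Function.Injective F.obj) :
    F ⋙ liftFun F g t b hsurj hw = t := by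
  refine CategoryTheory.Functor.ext (fun c => liftObj_comp F g t b hsurj hinj c)
    (fun c c' f => ?_)
  apply g.map_injective
  have h1 := Functor.congr_hom hw f
  simp only [Functor.comp_map] at h1
  simp [liftFun, eqToHom_map, h1]
  erw [eqToHom_map, eqToHom_trans]

end Lift

lemma hlp_of_inj {C D : Cat.{0,0}} (F : C ⟶ D) (hinj : Function.Injective F.toFunctor.obj)
    {E E' : Cat.{0,0}} (g : E ⟶ E') (hfull : Functor.Full g.toFunctor)
    (hfaith : Functor.Faithful g.toFunctor)
    (hsurj : Function.Surjective g.toFunctor.obj) : HasLiftingProperty F g := by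
  haveI := hfull
  haveI := hfaith
  constructor
  intro t b sq
  have hw : t.toFunctor ⋙ g.toFunctor = F.toFunctor ⋙ b.toFunctor :=
    congrArg Cat.Hom.toFunctor sq.w
  exact CommSq.HasLift.mk'
    ⟨(catHom (liftFun F.toFunctor g.toFunctor t.toFunctor b.toFunctor hsurj hw) : D ⟶ E),
    Cat.ext (liftFun_fac_left F.toFunctor g.toFunctor t.toFunctor b.toFunctor hsurj hw hinj),
    Cat.ext (liftFun_fac_right F.toFunctor g.toFunctor t.toFunctor b.toFunctor hsurj hw)⟩

lemma llp_eq : Llp (Rlp ICat) = fun _ _ F => Function.Injective F.toFunctor.obj := by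
  funext C D F
  apply propext
  constructor
  · intro h X Y hXY
    have hrlp : @Rlp Cat.{0,0} _ ICat (Cat.of (Ind (Option C))) (Cat.of (Discrete PUnit))
        (indToPUnit (Option C)).toCatHom := by
      rw [rlp_eq]
      exact ⟨indToPUnit_full _, indToPUnit_faithful _, indToPUnit_surj _⟩
    haveI := h (show Cat.of (Ind (Option C)) ⟶ Cat.of (Discrete PUnit)
      from (indToPUnit (Option C)).toCatHom) hrlp
    have sq : CommSq (show C ⟶ Cat.of (Ind (Option C)) from catHom (B := Cat.of (Ind (Option C))) (toInd C)) F
        (show Cat.of (Ind (Option C)) ⟶ Cat.of (Discrete PUnit) from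
          (indToPUnit (Option C)).toCatHom)
        (show D ⟶ Cat.of (Discrete PUnit) from catHom (B := Cat.of (Discrete PUnit)) ((Functor.const D).obj ⟨⟨⟩⟩)) :=
      ⟨Cat.ext (Functor.punit_ext' _ _)⟩
    have h1 := Functor.congr_obj (congrArg Cat.Hom.toFunctor sq.fac_left) X
    have h2 := Functor.congr_obj (congrArg Cat.Hom.toFunctor sq.fac_left) Y
    simp only [catComp_toFunctor, Functor.comp_obj, Functor.toCatHom_toFunctor, catHom_toFunctor,
      toInd] at h1 h2
    rw [← hXY] at h2
    exact Option.some_injective _ (congrArg Ind.as (h1.symm.trans h2))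
  · intro hinj P Q g hg
    rw [rlp_eq] at hg
    exact hlp_of_inj F hinj g hg.1 hg.2.1 hg.2.2

/-- in `Cat`, with `I` as above: (1) `I^□` consists exactly of the
functors which are full, faithful and surjective on objects; (2) `□(I^□)` consists
exactly of the functors which are injective on objects. -/
theorem statement7 :
    (Rlp ICat = fun _ _ F => F.toFunctor.Full ∧ F.toFunctor.Faithful ∧ Function.Surjective F.toFunctor.obj) ∧
    (Llp (Rlp ICat) = fun _ _ F => Function.Injective F.toFunctor.obj) :=
  ⟨rlp_eq, llp_eq⟩

end Paper
end

section
/- Let F ⊣ G and F' ⊣ G' be adjunctions between categories X and A (F, F': X → A left adjoints, G, G': A → X right adjoints), and let α: F ⟹ F' and β: G' ⟹ G be conjugate natural transformations. Assume A has pushouts and X has pullbacks. Then for every map f: X → Y in X and every map g: A → B in A, the lifting relation (f ⋆ α) ⧄ g holds if and only if f ⧄ (β ⋆ g) holds. -/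
universe v u₁ u₂

open CategoryTheory Limits

namespace Paper

section Star

variable {X : Type u₁} [Category.{v} X] {A : Type u₂} [Category.{v} A]

/-- `f ⋆ α`: the induced map from the pushout of `F f` along `α_X` to `F' Y`. -/
noncomputable def starMap [HasPushouts A] {F F' : X ⥤ A} (α : F ⟶ F')
    {x y : X} (f : x ⟶ y) : pushout (F.map f) (α.app x) ⟶ F'.obj y :=
  pushout.desc (α.app y) (F'.map f) (α.naturality f)

/-- `β ⋆ g`: the induced map from `G' A` to the pullback of `β_B` along `G g`. -/
noncomputable def costarMap [HasPullbacks X] {G G' : A ⥤ X} (β : G' ⟶ G)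
    {a b : A} (g : a ⟶ b) : G'.obj a ⟶ pullback (β.app b) (G.map g) :=
  pullback.lift (G'.map g) (β.app a) (β.naturality g)

/-- `α : F ⟶ F'` and `β : G' ⟶ G` are conjugate with respect to the adjunctions
`F ⊣ G` and `F' ⊣ G'`: the square of adjunction bijections together with
precomposition by `α_X` and postcomposition by `β_A` commutes. -/
def Conjugate {F F' : X ⥤ A} {G G' : A ⥤ X} (adj : F ⊣ G) (adj' : F' ⊣ G')
    (α : F ⟶ F') (β : G' ⟶ G) : Prop :=
  ∀ (x : X) (a : A) (u : F'.obj x ⟶ a),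
    (adj.homEquiv x a) (α.app x ≫ u) = (adj'.homEquiv x a) u ≫ β.app a

end Star

/-- for conjugate natural transformations `α : F ⟶ F'` and `β : G' ⟶ G`
between adjunctions `F ⊣ G`, `F' ⊣ G'`, the lifting relation `(f ⋆ α) ⧄ g` holds iff
`f ⧄ (β ⋆ g)` holds. -/
theorem statement9 {X : Type u₁} [Category.{v} X] {A : Type u₂} [Category.{v} A]
    [HasPushouts A] [HasPullbacks X]
    {F F' : X ⥤ A} {G G' : A ⥤ X} (adj : F ⊣ G) (adj' : F' ⊣ G')
    (α : F ⟶ F') (β : G' ⟶ G) (hconj : Conjugate adj adj' α β)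
    {x y : X} (f : x ⟶ y) {a b : A} (g : a ⟶ b) :

    HasLiftingProperty (starMap α f) g ↔ HasLiftingProperty f (costarMap β g) := by
  have hinl : pushout.inl (F.map f) (α.app x) ≫ starMap α f = α.app y := pushout.inl_desc _ _ _
  have hinr : pushout.inr (F.map f) (α.app x) ≫ starMap α f = F'.map f := pushout.inr_desc _ _ _
  have hfst : costarMap β g ≫ pullback.fst (β.app b) (G.map g) = G'.map g := pullback.lift_fst _ _ _
  have hsnd : costarMap β g ≫ pullback.snd (β.app b) (G.map g) = β.app a := pullback.lift_snd _ _ _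
  constructor
  · intro h
    constructor
    intro u v sq
    -- sq.w : u ≫ costarMap β g = f ≫ v
    have hcond : F.map f ≫ (adj.homEquiv y a).symm (v ≫ pullback.snd (β.app b) (G.map g))
        = α.app x ≫ (adj'.homEquiv x a).symm u := by
      apply (adj.homEquiv x a).injective
      rw [adj.homEquiv_naturality_left, Equiv.apply_symm_apply, hconj,
        Equiv.apply_symm_apply, ← Category.assoc, ← sq.w, Category.assoc, hsnd]
    set t : pushout (F.map f) (α.app x) ⟶ a :=
      pushout.desc ((adj.homEquiv y a).symm (v ≫ pullback.snd (β.app b) (G.map g)))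
        ((adj'.homEquiv x a).symm u) hcond with ht
    set s : F'.obj y ⟶ b := (adj'.homEquiv y b).symm (v ≫ pullback.fst (β.app b) (G.map g)) with hs
    have sq2 : CommSq t (starMap α f) g s := by
      constructor
      apply pushout.hom_ext
      · rw [← Category.assoc, ← Category.assoc, pushout.inl_desc, hinl]
        apply (adj.homEquiv y b).injective
        rw [adj.homEquiv_naturality_right, Equiv.apply_symm_apply, hconj, hs,
          Equiv.apply_symm_apply, Category.assoc, Category.assoc, pullback.condition]
      · rw [← Category.assoc, ← Category.assoc, pushout.inr_desc, hinr]
        apply (adj'.homEquiv x b).injective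
        rw [adj'.homEquiv_naturality_right, Equiv.apply_symm_apply,
          adj'.homEquiv_naturality_left, Equiv.apply_symm_apply, ← hfst, ← Category.assoc,
          sq.w, Category.assoc]
    haveI := h
    refine ⟨⟨⟨(adj'.homEquiv y a) sq2.lift, ?_, ?_⟩⟩⟩
    · rw [← adj'.homEquiv_naturality_left]
      have : F'.map f ≫ sq2.lift = pushout.inr (F.map f) (α.app x) ≫ t := by
        rw [← hinr, Category.assoc, sq2.fac_left]
      rw [this, ht, pushout.inr_desc, Equiv.apply_symm_apply]
    · apply pullback.hom_ext
      · rw [Category.assoc, hfst, ← adj'.homEquiv_naturality_right, sq2.fac_right, hs,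
          Equiv.apply_symm_apply]
      · rw [Category.assoc, hsnd, ← hconj]
        have : α.app y ≫ sq2.lift = pushout.inl (F.map f) (α.app x) ≫ t := by
          rw [← hinl, Category.assoc, sq2.fac_left]
        rw [this, ht, pushout.inl_desc, Equiv.apply_symm_apply]
  · intro h
    constructor
    intro u v sq
    -- sq.w : u ≫ g = starMap α f ≫ v
    have hc : (adj'.homEquiv y b) v ≫ β.app b
        = (adj.homEquiv y a) (pushout.inl (F.map f) (α.app x) ≫ u) ≫ G.map g := by
      rw [← adj.homEquiv_naturality_right, Category.assoc, sq.w, ← Category.assoc, hinl, hconj]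
    set t' : x ⟶ G'.obj a := (adj'.homEquiv x a) (pushout.inr (F.map f) (α.app x) ≫ u) with ht'
    set s' : y ⟶ pullback (β.app b) (G.map g) :=
      pullback.lift ((adj'.homEquiv y b) v)
        ((adj.homEquiv y a) (pushout.inl (F.map f) (α.app x) ≫ u)) hc with hs'
    have sq2 : CommSq t' f (costarMap β g) s' := by
      constructor
      apply pullback.hom_ext
      · rw [Category.assoc, Category.assoc, hfst, pullback.lift_fst, ht',
          ← adj'.homEquiv_naturality_right, Category.assoc, sq.w, ← Category.assoc, hinr,
          adj'.homEquiv_naturality_left]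
      · rw [Category.assoc, Category.assoc, hsnd, pullback.lift_snd, ht', ← hconj,
          ← Category.assoc, ← pushout.condition, Category.assoc,
          adj.homEquiv_naturality_left]
    haveI := h
    refine ⟨⟨⟨(adj'.homEquiv y a).symm sq2.lift, ?_, ?_⟩⟩⟩
    · apply pushout.hom_ext
      · rw [← Category.assoc, hinl]
        apply (adj.homEquiv y a).injective
        rw [hconj, Equiv.apply_symm_apply]
        have : sq2.lift ≫ β.app a = sq2.lift ≫ costarMap β g ≫ pullback.snd (β.app b) (G.map g) := by
          rw [← Category.assoc, ← hsnd, Category.assoc]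
        rw [this, ← Category.assoc, sq2.fac_right, hs', pullback.lift_snd]
      · rw [← Category.assoc, hinr]
        apply (adj'.homEquiv x a).injective
        rw [adj'.homEquiv_naturality_left, Equiv.apply_symm_apply, sq2.fac_left, ht']
    · apply (adj'.homEquiv y b).injective
      rw [adj'.homEquiv_naturality_right, Equiv.apply_symm_apply]
      have : sq2.lift ≫ G'.map g = sq2.lift ≫ costarMap β g ≫ pullback.fst (β.app b) (G.map g) := by
        rw [hfst]
      rw [this, ← Category.assoc, sq2.fac_right, hs', pullback.lift_fst]

end Paper
end

section
/- Let F ⊣ G and F' ⊣ G' be adjunctions between categories X and A, with conjugate natural transformations α: F ⟹ F' and β: G' ⟹ G, where A has pushouts and X has pullbacks. Let I be a class of maps in X and J a class of maps in A. If I ⋆ α ⊆ J, then (□(I^□)) ⋆ α ⊆ □(J^□). -/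
universe v u₁ u₂

open CategoryTheory Limits

namespace Paper

variable {X : Type u₁} [Category.{v} X] {A : Type u₂} [Category.{v} A]

/-- `g ⋄ β`: the induced map from `G' a` to the pullback of `G g` along `β_b`. -/
noncomputable def pbMap [HasPullbacks X] {G G' : A ⥤ X} (β : G' ⟶ G)
    {a b : A} (g : a ⟶ b) : G'.obj a ⟶ pullback (G.map g) (β.app b) :=
  pullback.lift (β.app a) (G'.map g) (β.naturality g).symm

lemma conj_symm {F F' : X ⥤ A} {G G' : A ⥤ X} (adj : F ⊣ G) (adj' : F' ⊣ G')
    (α : F ⟶ F') (β : G' ⟶ G) (hconj : Conjugate adj adj' α β)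
    (x : X) (a : A) (u' : x ⟶ G'.obj a) :
    α.app x ≫ (adj'.homEquiv x a).symm u' = (adj.homEquiv x a).symm (u' ≫ β.app a) := by
  apply (adj.homEquiv x a).injective
  rw [hconj, Equiv.apply_symm_apply, Equiv.apply_symm_apply]

lemma key [HasPushouts A] [HasPullbacks X]
    {F F' : X ⥤ A} {G G' : A ⥤ X} (adj : F ⊣ G) (adj' : F' ⊣ G')
    (α : F ⟶ F') (β : G' ⟶ G) (hconj : Conjugate adj adj' α β)
    {x y : X} (f : x ⟶ y) {a b : A} (g : a ⟶ b) :
    HasLiftingProperty (starMap α f) g ↔ HasLiftingProperty f (pbMap β g) := by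
  constructor
  · intro H
    constructor
    intro t btm sq
    -- build the corresponding square in A
    have hfst : pbMap β g ≫ pullback.fst (G.map g) (β.app b) = β.app a := by
      simp [pbMap, pullback.lift_fst, pullback.lift_snd, pullback.lift_fst_assoc, pullback.lift_snd_assoc]
    have hsnd : pbMap β g ≫ pullback.snd (G.map g) (β.app b) = G'.map g := by
      simp [pbMap, pullback.lift_fst, pullback.lift_snd, pullback.lift_fst_assoc, pullback.lift_snd_assoc]
    set u : F.obj y ⟶ a :=
      (adj.homEquiv y a).symm (btm ≫ pullback.fst (G.map g) (β.app b)) with hu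
    set v : F'.obj x ⟶ a := (adj'.homEquiv x a).symm t with hv
    have hbase : t ≫ β.app a = f ≫ btm ≫ pullback.fst (G.map g) (β.app b) := by
      rw [← hfst]
      simp only [← Category.assoc]
      rw [← sq.w]
    have hcomm : F.map f ≫ u = α.app x ≫ v := by
      rw [hv, conj_symm adj adj' α β hconj, hu,
        ← Adjunction.homEquiv_naturality_left_symm]
      congr 1
      exact hbase.symm
    set top' : pushout (F.map f) (α.app x) ⟶ a := pushout.desc u v hcomm with htop'
    set bot' : F'.obj y ⟶ b :=
      (adj'.homEquiv y b).symm (btm ≫ pullback.snd (G.map g) (β.app b)) with hbot'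
    have sq' : CommSq top' (starMap α f) g bot' := by
      constructor
      apply pushout.hom_ext
      · rw [← Category.assoc, ← Category.assoc]
        simp only [htop', starMap, pushout.inl_desc]
        rw [hbot', conj_symm adj adj' α β hconj, hu,
          ← Adjunction.homEquiv_naturality_right_symm, Category.assoc,
          Category.assoc, pullback.condition]
      · rw [← Category.assoc, ← Category.assoc]
        simp only [htop', starMap, pushout.inr_desc]
        rw [hv, ← Adjunction.homEquiv_naturality_right_symm, hbot',
          ← Adjunction.homEquiv_naturality_left_symm]
        congr 1
        rw [← Category.assoc, ← sq.w]; simp [hsnd]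
    obtain ⟨⟨L⟩⟩ := H.sq_hasLift sq'
    refine ⟨⟨⟨(adj'.homEquiv y a) L.l, ?_, ?_⟩⟩⟩
    · rw [← Adjunction.homEquiv_naturality_left]
      have : F'.map f ≫ L.l = v := by
        have := L.fac_left
        calc F'.map f ≫ L.l
            = pushout.inr (F.map f) (α.app x) ≫ starMap α f ≫ L.l := by
              simp [starMap, pushout.inl_desc, pushout.inr_desc, pushout.inl_desc_assoc, pushout.inr_desc_assoc]
          _ = pushout.inr (F.map f) (α.app x) ≫ top' := by rw [this]
          _ = v := by simp [htop', pushout.inl_desc, pushout.inr_desc, pushout.inl_desc_assoc, pushout.inr_desc_assoc]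
      rw [this, hv, Equiv.apply_symm_apply]
    · apply pullback.hom_ext
      · rw [Category.assoc, hfst, ← hconj]
        have : α.app y ≫ L.l = u := by
          calc α.app y ≫ L.l
              = pushout.inl (F.map f) (α.app x) ≫ starMap α f ≫ L.l := by
                simp [starMap, pushout.inl_desc, pushout.inr_desc, pushout.inl_desc_assoc, pushout.inr_desc_assoc]
            _ = pushout.inl (F.map f) (α.app x) ≫ top' := by rw [L.fac_left]
            _ = u := by simp [htop', pushout.inl_desc, pushout.inr_desc, pushout.inl_desc_assoc, pushout.inr_desc_assoc]
        rw [this, hu, Equiv.apply_symm_apply]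
      · rw [Category.assoc, hsnd, ← Adjunction.homEquiv_naturality_right, L.fac_right,
          hbot', Equiv.apply_symm_apply]
  · intro H
    constructor
    intro top bot sq
    have hfst : pbMap β g ≫ pullback.fst (G.map g) (β.app b) = β.app a := by
      simp [pbMap, pullback.lift_fst, pullback.lift_snd, pullback.lift_fst_assoc, pullback.lift_snd_assoc]
    have hsnd : pbMap β g ≫ pullback.snd (G.map g) (β.app b) = G'.map g := by
      simp [pbMap, pullback.lift_fst, pullback.lift_snd, pullback.lift_fst_assoc, pullback.lift_snd_assoc]
    set t : x ⟶ G'.obj a :=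
      (adj'.homEquiv x a) (pushout.inr (F.map f) (α.app x) ≫ top) with ht
    have hcompat : (adj.homEquiv y a) (pushout.inl (F.map f) (α.app x) ≫ top) ≫ G.map g
        = (adj'.homEquiv y b) bot ≫ β.app b := by
      rw [← Adjunction.homEquiv_naturality_right, ← hconj]
      congr 1
      rw [Category.assoc, sq.w, ← Category.assoc]
      simp [starMap, pushout.inl_desc, pushout.inr_desc, pushout.inl_desc_assoc, pushout.inr_desc_assoc]
    set btm : y ⟶ pullback (G.map g) (β.app b) :=
      pullback.lift ((adj.homEquiv y a) (pushout.inl (F.map f) (α.app x) ≫ top))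
        ((adj'.homEquiv y b) bot) hcompat with hbtm
    have sq' : CommSq t f (pbMap β g) btm := by
      constructor
      apply pullback.hom_ext
      · calc (t ≫ pbMap β g) ≫ pullback.fst (G.map g) (β.app b)
            = t ≫ β.app a := by rw [Category.assoc, hfst]
          _ = (adj'.homEquiv x a) (pushout.inr (F.map f) (α.app x) ≫ top) ≫ β.app a := by
              rw [ht]
          _ = (adj.homEquiv x a) (α.app x ≫ pushout.inr (F.map f) (α.app x) ≫ top) := by
              rw [hconj]
          _ = (adj.homEquiv x a) (F.map f ≫ pushout.inl (F.map f) (α.app x) ≫ top) := by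
              rw [← Category.assoc, ← Category.assoc, pushout.condition]
          _ = f ≫ (adj.homEquiv y a) (pushout.inl (F.map f) (α.app x) ≫ top) := by
              rw [Adjunction.homEquiv_naturality_left]
          _ = (f ≫ btm) ≫ pullback.fst (G.map g) (β.app b) := by
              rw [hbtm]; simp [pullback.lift_fst, pullback.lift_snd, pullback.lift_fst_assoc, pullback.lift_snd_assoc]
      · calc (t ≫ pbMap β g) ≫ pullback.snd (G.map g) (β.app b)
            = t ≫ G'.map g := by rw [Category.assoc, hsnd]
          _ = (adj'.homEquiv x b) ((pushout.inr (F.map f) (α.app x) ≫ top) ≫ g) := by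
              rw [ht]
              exact (Adjunction.homEquiv_naturality_right adj' _ _).symm
          _ = (adj'.homEquiv x b) (F'.map f ≫ bot) := by
              rw [Category.assoc, sq.w, ← Category.assoc]
              congr 1
              simp [starMap, pushout.inl_desc, pushout.inr_desc, pushout.inl_desc_assoc, pushout.inr_desc_assoc]
          _ = f ≫ (adj'.homEquiv y b) bot := by
              rw [Adjunction.homEquiv_naturality_left]
          _ = (f ≫ btm) ≫ pullback.snd (G.map g) (β.app b) := by
              rw [hbtm]; simp [pullback.lift_fst, pullback.lift_snd, pullback.lift_fst_assoc, pullback.lift_snd_assoc]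
    obtain ⟨⟨l⟩⟩ := H.sq_hasLift sq'
    refine ⟨⟨⟨(adj'.homEquiv y a).symm l.l, ?_, ?_⟩⟩⟩
    · apply pushout.hom_ext
      · rw [← Category.assoc]
        simp only [starMap, pushout.inl_desc]
        rw [conj_symm adj adj' α β hconj]
        have : l.l ≫ β.app a
            = (adj.homEquiv y a) (pushout.inl (F.map f) (α.app x) ≫ top) := by
          rw [← hfst, ← Category.assoc, l.fac_right]
          simp [hbtm, pullback.lift_fst, pullback.lift_snd, pullback.lift_fst_assoc, pullback.lift_snd_assoc]
        rw [this, Equiv.symm_apply_apply]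
      · rw [← Category.assoc]
        simp only [starMap, pushout.inr_desc]
        rw [← Adjunction.homEquiv_naturality_left_symm, l.fac_left, ht,
          Equiv.symm_apply_apply]
    · rw [← Adjunction.homEquiv_naturality_right_symm]
      have : l.l ≫ G'.map g = (adj'.homEquiv y b) bot := by
        rw [← hsnd, ← Category.assoc, l.fac_right]
        simp [hbtm, pullback.lift_fst, pullback.lift_snd, pullback.lift_fst_assoc, pullback.lift_snd_assoc]
      rw [this, Equiv.symm_apply_apply]

/-- for conjugate natural transformations `α : F ⟶ F'`, `β : G' ⟶ G`
between adjunctions, if `I ⋆ α ⊆ J`, then `(□(I^□)) ⋆ α ⊆ □(J^□)`. -/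
theorem statement10 [HasPushouts A] [HasPullbacks X]
    {F F' : X ⥤ A} {G G' : A ⥤ X} (adj : F ⊣ G) (adj' : F' ⊣ G')
    (α : F ⟶ F') (β : G' ⟶ G) (hconj : Conjugate adj adj' α β)
    (I : MorphismProperty X) (J : MorphismProperty A)
    (hIJ : ∀ ⦃x y : X⦄ (f : x ⟶ y), I f → J (starMap α f)) :
    ∀ ⦃x y : X⦄ (f : x ⟶ y), Llp (Rlp I) f → Llp (Rlp J) (starMap α f) := by
  intro x y f hf
  intro P Q g hg
  rw [key adj adj' α β hconj]
  exact hf _ (fun p q i hi => ((key adj adj' α β hconj i g).mp (hg _ (hIJ i hi))))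

end Paper
end
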